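/- Let γ > 0, σ > 0 and μ, a ∈ ℝ, and set μ_A = μ − √3·σ²/γ and μ_B = μ + √3·σ²/γ. Then ∫_ℝ w · (1 + √3·|w−a|/γ) · exp(−√3·|w−a|/γ) · φ_{μ,σ}(w) dw = exp((3σ² + 2√3·γ(a−μ))/(2γ²)) · (((1 − √3·a/γ)·μ_A + (√3/γ)·(μ_A² + σ²)) · Φ((μ_A − a)/σ) + ((1 − √3·a/γ) + (√3/γ)·(μ_A + a)) · (σ/√(2π)) · exp(−(a−μ_A)²/(2σ²))) − exp((3σ² − 2√3·γ(a−μ))/(2γ²)) · ((−(1 + √3·a/γ)·μ_B + (√3/γ)·(μ_B² + σ²)) · Φ((a − μ_B)/σ) + ((1 + √3·a/γ) − (√3/γ)·(μ_B + a)) · (σ/√(2π)) · exp(−(a−μ_B)²/(2σ²))). -/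

import Mathlib

open MeasureTheory Real Set Filter Topology

/-- Standard normal cumulative distribution function. -/
noncomputable def Phi (t : ℝ) : ℝ :=
  ∫ u in Set.Iic t, (Real.sqrt (2 * Real.pi))⁻¹ * Real.exp (-u ^ 2 / 2)

/-- Normal density with mean μ and standard deviation σ. -/
noncomputable def normalPDF (μ σ x : ℝ) : ℝ :=
  (σ * Real.sqrt (2 * Real.pi))⁻¹ * Real.exp (-(x - μ) ^ 2 / (2 * σ ^ 2))

lemma integral_comp_add_right_Iic (f : ℝ → ℝ) (a c : ℝ) :
    ∫ x in Iic a, f (x + c) = ∫ x in Iic (a + c), f x := by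
  have h := (measurePreserving_add_right (volume : Measure ℝ) c).setIntegral_preimage_emb
    (measurableEmbedding_addRight c) f (Iic (a + c))
  have hs : (· + c) ⁻¹' Iic (a + c) = Iic a := by ext x; simp
  rwa [hs] at h

lemma integral_comp_mul_left_Iic' (g : ℝ → ℝ) (a : ℝ) {b : ℝ} (hb : 0 < b) :
    ∫ x in Iic a, g (b * x) = b⁻¹ • ∫ x in Iic (b * a), g x := by
  have e1 := integral_comp_neg_Ioi (-a) (fun x => g (b * x))
  have e2 := integral_comp_mul_left_Ioi (fun y => g (-y)) (-a) hb
  have e3 := integral_comp_neg_Ioi (b * -a) g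
  simp only [neg_neg, mul_neg, neg_mul] at e1 e2 e3
  rw [← e1, e2, e3]

lemma M0ic (m : ℝ) {σ : ℝ} (hσ : 0 < σ) (t : ℝ) :
    ∫ w in Iic t, normalPDF m σ w = Phi ((t - m) / σ) := by
  have h1 : ∫ w in Iic t, normalPDF m σ w = ∫ x in Iic (t - m), normalPDF m σ (x + m) := by
    rw [integral_comp_add_right_Iic (normalPDF m σ) (t - m) m, sub_add_cancel]
  have h2 : ∀ x : ℝ, normalPDF m σ (x + m) =
      σ⁻¹ * ((Real.sqrt (2 * Real.pi))⁻¹ * Real.exp (-(σ⁻¹ * x) ^ 2 / 2)) := by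
    intro x
    unfold normalPDF
    rw [mul_inv, mul_assoc]
    congr 2
    rw [show x + m - m = x by ring]
    field_simp
  have h3 := integral_comp_mul_left_Iic'
    (fun u => (Real.sqrt (2 * Real.pi))⁻¹ * Real.exp (-u ^ 2 / 2)) (t - m)
    (b := σ⁻¹) (inv_pos.mpr hσ)
  rw [h1]
  simp only [h2]
  rw [integral_const_mul _, h3, inv_inv, smul_eq_mul, ← mul_assoc,
    inv_mul_cancel₀ hσ.ne', one_mul, Phi, mul_comm σ⁻¹ (t - m), ← div_eq_mul_inv]


lemma integrable_sq_mul_exp_neg_mul_sq {b : ℝ} (hb : 0 < b) :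
    Integrable fun x : ℝ => x ^ 2 * Real.exp (-b * x ^ 2) := by
  have hb2 : 0 < b / 2 := by linarith
  refine Integrable.mono' ((integrable_exp_neg_mul_sq hb2).const_mul (2 / b)) ?_ ?_
  · exact (Continuous.mul (continuous_pow 2) (by continuity)).aestronglyMeasurable
  · refine Filter.Eventually.of_forall fun x => ?_
    rw [Real.norm_eq_abs, abs_mul, abs_of_nonneg (sq_nonneg x), abs_of_nonneg (Real.exp_pos _).le]
    have h1 : b / 2 * x ^ 2 ≤ Real.exp (b / 2 * x ^ 2) := by
      have := Real.add_one_le_exp (b / 2 * x ^ 2)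
      nlinarith
    have h2 : x ^ 2 ≤ 2 / b * Real.exp (b / 2 * x ^ 2) := by
      rw [div_mul_eq_mul_div, le_div_iff₀ hb]
      calc x ^ 2 * b = 2 * (b / 2 * x ^ 2) := by ring
        _ ≤ 2 * Real.exp (b / 2 * x ^ 2) := by linarith
    calc x ^ 2 * Real.exp (-b * x ^ 2)
        ≤ 2 / b * Real.exp (b / 2 * x ^ 2) * Real.exp (-b * x ^ 2) :=
          mul_le_mul_of_nonneg_right h2 (Real.exp_pos _).le
      _ = 2 / b * Real.exp (-(b / 2) * x ^ 2) := by
          rw [mul_assoc, ← Real.exp_add]; ring_nf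

lemma integrable_exp_shift {b : ℝ} (hb : 0 < b) (m : ℝ) :
    Integrable fun x : ℝ => Real.exp (-b * (x - m) ^ 2) :=
  (integrable_exp_neg_mul_sq hb).comp_sub_right m

lemma integrable_mul_exp_shift {b : ℝ} (hb : 0 < b) (m : ℝ) :
    Integrable fun x : ℝ => x * Real.exp (-b * (x - m) ^ 2) := by
  have h := ((integrable_mul_exp_neg_mul_sq hb).add
    ((integrable_exp_neg_mul_sq hb).const_mul m)).comp_sub_right m
  exact h.congr (Filter.Eventually.of_forall fun x => by simp; ring)

lemma integrable_sq_mul_exp_shift {b : ℝ} (hb : 0 < b) (m : ℝ) :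
    Integrable fun x : ℝ => x ^ 2 * Real.exp (-b * (x - m) ^ 2) := by
  have h := (((integrable_sq_mul_exp_neg_mul_sq hb).add
      (((integrable_mul_exp_neg_mul_sq hb)).const_mul (2 * m))).add
    ((integrable_exp_neg_mul_sq hb).const_mul (m ^ 2))).comp_sub_right m
  exact h.congr (Filter.Eventually.of_forall fun x => by simp; ring)

lemma normalPDF_eq (m σ x : ℝ) :
    normalPDF m σ x = (σ * Real.sqrt (2 * Real.pi))⁻¹ * Real.exp (-(2 * σ ^ 2)⁻¹ * (x - m) ^ 2) := by
  unfold normalPDF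
  congr 1
  rw [neg_div, div_eq_inv_mul, neg_mul]

lemma integrable_normalPDF {σ : ℝ} (hσ : 0 < σ) (m : ℝ) : Integrable (normalPDF m σ) := by
  have hb : 0 < (2 * σ ^ 2)⁻¹ := by positivity
  have he : normalPDF m σ = fun x => (σ * Real.sqrt (2 * Real.pi))⁻¹ *
      Real.exp (-(2 * σ ^ 2)⁻¹ * (x - m) ^ 2) := funext fun x => normalPDF_eq m σ x
  rw [he]
  exact (integrable_exp_shift hb m).const_mul _

lemma integrable_mul_normalPDF {σ : ℝ} (hσ : 0 < σ) (m : ℝ) :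
    Integrable fun x => x * normalPDF m σ x := by
  have hb : 0 < (2 * σ ^ 2)⁻¹ := by positivity
  simp only [normalPDF_eq]
  exact ((integrable_mul_exp_shift hb m).const_mul ((σ * Real.sqrt (2 * Real.pi))⁻¹)).congr
    (Filter.Eventually.of_forall fun x => by ring)

lemma integrable_sq_mul_normalPDF {σ : ℝ} (hσ : 0 < σ) (m : ℝ) :
    Integrable fun x => x ^ 2 * normalPDF m σ x := by
  have hb : 0 < (2 * σ ^ 2)⁻¹ := by positivity
  simp only [normalPDF_eq]
  exact ((integrable_sq_mul_exp_shift hb m).const_mul ((σ * Real.sqrt (2 * Real.pi))⁻¹)).congr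
    (Filter.Eventually.of_forall fun x => by ring)


lemma hasDerivAt_normalPDF (m : ℝ) {σ : ℝ} (hσ : 0 < σ) (w : ℝ) :
    HasDerivAt (normalPDF m σ) (-(w - m) / σ ^ 2 * normalPDF m σ w) w := by
  have h1 : HasDerivAt (fun w : ℝ => -(w - m) ^ 2 / (2 * σ ^ 2)) (-(w - m) / σ ^ 2) w := by
    have h := (((hasDerivAt_id w).sub_const m).pow 2).neg.div_const (2 * σ ^ 2)
    refine h.congr_deriv ?_
    field_simp
    simp only [id_eq]
    ring
  have h2 := (h1.exp).const_mul ((σ * Real.sqrt (2 * Real.pi))⁻¹)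
  have he : normalPDF m σ = fun w => (σ * Real.sqrt (2 * Real.pi))⁻¹ *
      Real.exp (-(w - m) ^ 2 / (2 * σ ^ 2)) := rfl
  rw [he]
  refine h2.congr_deriv ?_
  beta_reduce
  ring

lemma tendsto_exp_quad {b : ℝ} (hb : 0 < b) (m : ℝ) :
    Tendsto (fun w : ℝ => Real.exp (-b * (w - m) ^ 2)) atBot (𝓝 0) := by
  apply Real.tendsto_exp_atBot.comp
  have h1 : Tendsto (fun w : ℝ => w - m) atBot atBot :=
    tendsto_atBot_add_const_right _ (-m) tendsto_id
  have h2 : Tendsto (fun w : ℝ => (w - m) * (w - m)) atBot atTop := h1.atBot_mul_atBot₀ h1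
  have h3 := h2.const_mul_atTop_of_neg (neg_lt_zero.mpr hb) (r := -b)
  exact h3.congr fun w => by ring

lemma tendsto_mul_exp_quad {b : ℝ} (hb : 0 < b) (m : ℝ) :
    Tendsto (fun w : ℝ => w * Real.exp (-b * (w - m) ^ 2)) atBot (𝓝 0) := by
  have key : Tendsto (fun y : ℝ => y * Real.exp (-b * y ^ 2)) atBot (𝓝 0) := by
    have hle : (atBot : Filter ℝ) ≤ cocompact ℝ := by
      rw [cocompact_eq_atBot_atTop]
      exact le_sup_left
    have h := (tendsto_rpow_abs_mul_exp_neg_mul_sq_cocompact hb 1).mono_left hle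
    apply squeeze_zero_norm _ h
    intro y
    rw [Real.norm_eq_abs, abs_mul, abs_of_nonneg (Real.exp_pos _).le, Real.rpow_one]
  have h1 : Tendsto (fun w : ℝ => w - m) atBot atBot :=
    tendsto_atBot_add_const_right _ (-m) tendsto_id
  have h2 : Tendsto (fun w : ℝ => (w - m) * Real.exp (-b * (w - m) ^ 2)) atBot (𝓝 0) :=
    key.comp h1
  have h3 := h2.add ((tendsto_exp_quad hb m).const_mul m)
  simp only [mul_zero, add_zero] at h3
  exact h3.congr fun w => by ring

lemma tendsto_normalPDF_atBot (m : ℝ) {σ : ℝ} (hσ : 0 < σ) :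
    Tendsto (fun w : ℝ => normalPDF m σ w) atBot (𝓝 0) := by
  have hb : (0:ℝ) < (2 * σ ^ 2)⁻¹ := by positivity
  have h := ((tendsto_exp_quad hb m).const_mul ((σ * Real.sqrt (2 * Real.pi))⁻¹))
  rw [mul_zero] at h
  apply h.congr fun w => ?_
  unfold normalPDF
  rw [neg_div, div_eq_inv_mul, neg_mul]

lemma tendsto_mul_normalPDF_atBot (m : ℝ) {σ : ℝ} (hσ : 0 < σ) :
    Tendsto (fun w : ℝ => w * normalPDF m σ w) atBot (𝓝 0) := by
  have hb : (0:ℝ) < (2 * σ ^ 2)⁻¹ := by positivity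
  have h := ((tendsto_mul_exp_quad hb m).const_mul ((σ * Real.sqrt (2 * Real.pi))⁻¹))
  rw [mul_zero] at h
  apply h.congr fun w => ?_
  unfold normalPDF
  rw [neg_div, div_eq_inv_mul, neg_mul]
  ring

lemma M1c (m : ℝ) {σ : ℝ} (hσ : 0 < σ) (t : ℝ) :
    ∫ w in Iic t, (w - m) * normalPDF m σ w = -(σ ^ 2 * normalPDF m σ t) := by
  have hder : ∀ x ∈ Iic t, HasDerivAt (fun w => -σ ^ 2 * normalPDF m σ w)
      ((x - m) * normalPDF m σ x) x := by
    intro x _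
    have h := (hasDerivAt_normalPDF m hσ x).const_mul (-σ ^ 2)
    refine h.congr_deriv ?_
    field_simp
  have hint : IntegrableOn (fun w => (w - m) * normalPDF m σ w) (Iic t) := by
    apply Integrable.integrableOn
    exact ((integrable_mul_normalPDF hσ m).sub ((integrable_normalPDF hσ m).const_mul m)).congr
      (Filter.Eventually.of_forall fun x => by simp only [Pi.sub_apply, Pi.add_apply]; ring)
  have htend : Tendsto (fun w => -σ ^ 2 * normalPDF m σ w) atBot (𝓝 0) := by
    have := (tendsto_normalPDF_atBot m hσ).const_mul (-σ ^ 2)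
    rwa [mul_zero] at this
  have h := integral_Iic_of_hasDerivAt_of_tendsto' hder hint htend
  rw [h]; ring

lemma M2c (m : ℝ) {σ : ℝ} (hσ : 0 < σ) (t : ℝ) :
    ∫ w in Iic t, ((w - m) ^ 2 * normalPDF m σ w - σ ^ 2 * normalPDF m σ w) =
      -σ ^ 2 * ((t - m) * normalPDF m σ t) := by
  have hder : ∀ x ∈ Iic t, HasDerivAt (fun w => -σ ^ 2 * ((w - m) * normalPDF m σ w))
      ((x - m) ^ 2 * normalPDF m σ x - σ ^ 2 * normalPDF m σ x) x := by
    intro x _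
    have hid : HasDerivAt (fun w : ℝ => w - m) 1 x := (hasDerivAt_id x).sub_const m
    have h := ((hid.mul (hasDerivAt_normalPDF m hσ x)).const_mul (-σ ^ 2))
    refine h.congr_deriv ?_
    field_simp
    ring
  have hint : IntegrableOn
      (fun w => (w - m) ^ 2 * normalPDF m σ w - σ ^ 2 * normalPDF m σ w) (Iic t) := by
    apply Integrable.integrableOn
    have h2 : Integrable (fun w => (w - m) ^ 2 * normalPDF m σ w) := by
      refine (((integrable_sq_mul_normalPDF hσ m).sub
        (((integrable_mul_normalPDF hσ m)).const_mul (2 * m))).add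
        ((integrable_normalPDF hσ m).const_mul (m ^ 2))).congr
        (Filter.Eventually.of_forall fun x => by simp only [Pi.sub_apply, Pi.add_apply]; ring)
    exact h2.sub ((integrable_normalPDF hσ m).const_mul (σ ^ 2))
  have htend : Tendsto (fun w => -σ ^ 2 * ((w - m) * normalPDF m σ w)) atBot (𝓝 0) := by
    have h1 := (tendsto_mul_normalPDF_atBot m hσ).sub
      ((tendsto_normalPDF_atBot m hσ).const_mul m)
    simp only [mul_zero, sub_zero] at h1
    have h2 := h1.const_mul (-σ ^ 2)
    rw [mul_zero] at h2
    exact h2.congr fun w => by ring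
  have h := integral_Iic_of_hasDerivAt_of_tendsto' hder hint htend
  rw [h]; ring

lemma M1ic (m : ℝ) {σ : ℝ} (hσ : 0 < σ) (t : ℝ) :
    ∫ w in Iic t, w * normalPDF m σ w =
      m * Phi ((t - m) / σ) - σ ^ 2 * normalPDF m σ t := by
  have hsplit : ∀ w : ℝ, w * normalPDF m σ w =
      (w - m) * normalPDF m σ w + m * normalPDF m σ w := fun w => by ring
  rw [setIntegral_congr_fun measurableSet_Iic fun w _ => hsplit w]
  rw [integral_add]
  · rw [M1c m hσ t, integral_const_mul, M0ic m hσ t]; ring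
  · apply Integrable.integrableOn
    exact ((integrable_mul_normalPDF hσ m).sub ((integrable_normalPDF hσ m).const_mul m)).congr
      (Filter.Eventually.of_forall fun x => by simp only [Pi.sub_apply, Pi.add_apply]; ring)
  · exact ((integrable_normalPDF hσ m).const_mul m).integrableOn

lemma M2ic (m : ℝ) {σ : ℝ} (hσ : 0 < σ) (t : ℝ) :
    ∫ w in Iic t, w ^ 2 * normalPDF m σ w =
      (m ^ 2 + σ ^ 2) * Phi ((t - m) / σ) - σ ^ 2 * (t + m) * normalPDF m σ t := by
  have hsplit : ∀ w : ℝ, w ^ 2 * normalPDF m σ w =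
      ((w - m) ^ 2 * normalPDF m σ w - σ ^ 2 * normalPDF m σ w) +
        (2 * m * (w * normalPDF m σ w) + (σ ^ 2 - m ^ 2) * normalPDF m σ w) := fun w => by ring
  rw [setIntegral_congr_fun measurableSet_Iic fun w _ => hsplit w]
  have i1 : IntegrableOn
      (fun w => (w - m) ^ 2 * normalPDF m σ w - σ ^ 2 * normalPDF m σ w) (Iic t) := by
    apply Integrable.integrableOn
    refine Integrable.sub ?_ ((integrable_normalPDF hσ m).const_mul (σ ^ 2))
    exact (((integrable_sq_mul_normalPDF hσ m).sub
      (((integrable_mul_normalPDF hσ m)).const_mul (2 * m))).add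
      ((integrable_normalPDF hσ m).const_mul (m ^ 2))).congr
      (Filter.Eventually.of_forall fun x => by simp only [Pi.sub_apply, Pi.add_apply]; ring)
  have i2 : IntegrableOn
      (fun w => 2 * m * (w * normalPDF m σ w) + (σ ^ 2 - m ^ 2) * normalPDF m σ w) (Iic t) := by
    apply Integrable.integrableOn
    exact ((integrable_mul_normalPDF hσ m).const_mul (2 * m)).add
      ((integrable_normalPDF hσ m).const_mul (σ ^ 2 - m ^ 2))
  rw [integral_add i1 i2, M2c m hσ t, integral_add
      (((integrable_mul_normalPDF hσ m).const_mul (2 * m)).integrableOn)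
      (((integrable_normalPDF hσ m).const_mul (σ ^ 2 - m ^ 2)).integrableOn),
    integral_const_mul, integral_const_mul, M1ic m hσ t, M0ic m hσ t]
  ring

lemma normalPDF_neg (m σ x : ℝ) : normalPDF m σ (-x) = normalPDF (-m) σ x := by
  unfold normalPDF
  congr 2
  ring

lemma M0oi (m : ℝ) {σ : ℝ} (hσ : 0 < σ) (t : ℝ) :
    ∫ w in Ioi t, normalPDF m σ w = Phi ((m - t) / σ) := by
  have h := integral_comp_neg_Iic (-t) (normalPDF m σ)
  simp only [neg_neg] at h
  rw [← h, setIntegral_congr_fun measurableSet_Iic fun x _ => normalPDF_neg m σ x,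
    M0ic (-m) hσ (-t)]
  congr 1
  ring

lemma M1oi (m : ℝ) {σ : ℝ} (hσ : 0 < σ) (t : ℝ) :
    ∫ w in Ioi t, w * normalPDF m σ w =
      m * Phi ((m - t) / σ) + σ ^ 2 * normalPDF m σ t := by
  have h := integral_comp_neg_Iic (-t) (fun x => x * normalPDF m σ x)
  -- h : ∫ x in Iic (-t), (-x) * normalPDF m σ (-x) = ∫ x in Ioi t, x * normalPDF m σ x
  simp only [neg_neg] at h
  rw [← h, setIntegral_congr_fun measurableSet_Iic
      (fun x _ => show -x * normalPDF m σ (-x) = -(x * normalPDF (-m) σ x) by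
        rw [normalPDF_neg]; ring),
    integral_neg, M1ic (-m) hσ (-t)]
  have e1 : normalPDF (-m) σ (-t) = normalPDF m σ t := by
    rw [show (-t : ℝ) = -(t : ℝ) from rfl, normalPDF_neg, neg_neg]
  rw [e1, show (-t - -m) / σ = (m - t) / σ by ring]
  ring

lemma M2oi (m : ℝ) {σ : ℝ} (hσ : 0 < σ) (t : ℝ) :
    ∫ w in Ioi t, w ^ 2 * normalPDF m σ w =
      (m ^ 2 + σ ^ 2) * Phi ((m - t) / σ) + σ ^ 2 * (t + m) * normalPDF m σ t := by
  have h := integral_comp_neg_Iic (-t) (fun x => x ^ 2 * normalPDF m σ x)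
  -- similar
  simp only [neg_neg] at h
  rw [← h, setIntegral_congr_fun measurableSet_Iic
      (fun x _ => show (-x) ^ 2 * normalPDF m σ (-x) = x ^ 2 * normalPDF (-m) σ x by
        rw [normalPDF_neg]; ring),
    M2ic (-m) hσ (-t)]
  have e1 : normalPDF (-m) σ (-t) = normalPDF m σ t := by
    rw [show (-t : ℝ) = -(t : ℝ) from rfl, normalPDF_neg, neg_neg]
  rw [e1, show (-t - -m) / σ = (m - t) / σ by ring]
  ring

lemma expShift (c m x : ℝ) {σ : ℝ} (hσ : σ ≠ 0) :
    Real.exp (c * x) * normalPDF m σ x =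
      Real.exp (c * m + c ^ 2 * σ ^ 2 / 2) * normalPDF (m + c * σ ^ 2) σ x := by
  unfold normalPDF
  rw [mul_left_comm, ← Real.exp_add, mul_left_comm, ← Real.exp_add]
  congr 1
  field_simp
  ring

theorem integral_id_mul_matern15_mul_normalPDF (γ σ μ a μA μB : ℝ)
    (hγ : 0 < γ) (hσ : 0 < σ)
    (hμA : μA = μ - Real.sqrt 3 * σ ^ 2 / γ) (hμB : μB = μ + Real.sqrt 3 * σ ^ 2 / γ) :
    ∫ w : ℝ, w * ((1 + Real.sqrt 3 * |w - a| / γ) * Real.exp (-(Real.sqrt 3) * |w - a| / γ)) *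
        normalPDF μ σ w =
      Real.exp ((3 * σ ^ 2 + 2 * Real.sqrt 3 * γ * (a - μ)) / (2 * γ ^ 2)) *
        (((1 - Real.sqrt 3 * a / γ) * μA + Real.sqrt 3 / γ * (μA ^ 2 + σ ^ 2)) *
            Phi ((μA - a) / σ) +
          ((1 - Real.sqrt 3 * a / γ) + Real.sqrt 3 / γ * (μA + a)) *
            (σ / Real.sqrt (2 * Real.pi)) * Real.exp (-(a - μA) ^ 2 / (2 * σ ^ 2))) -
      Real.exp ((3 * σ ^ 2 - 2 * Real.sqrt 3 * γ * (a - μ)) / (2 * γ ^ 2)) *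
        ((-((1 + Real.sqrt 3 * a / γ) * μB) + Real.sqrt 3 / γ * (μB ^ 2 + σ ^ 2)) *
            Phi ((a - μB) / σ) +
          ((1 + Real.sqrt 3 * a / γ) - Real.sqrt 3 / γ * (μB + a)) *
            (σ / Real.sqrt (2 * Real.pi)) * Real.exp (-(a - μB) ^ 2 / (2 * σ ^ 2))) := by
  have hs3 : Real.sqrt 3 ^ 2 = 3 := Real.sq_sqrt (by norm_num)
  set s := Real.sqrt 3 with hs
  set KB := Real.exp ((3 * σ ^ 2 - 2 * s * γ * (a - μ)) / (2 * γ ^ 2)) with hKB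
  set KA := Real.exp ((3 * σ ^ 2 + 2 * s * γ * (a - μ)) / (2 * γ ^ 2)) with hKA
  set f := fun w : ℝ => w * ((1 + s * |w - a| / γ) * Real.exp (-s * |w - a| / γ)) *
      normalPDF μ σ w with hf
  -- pointwise identity on Iic a
  have eμB : μ + s / γ * σ ^ 2 = μB := by rw [hμB]; ring
  have eμA : μ + -(s / γ) * σ ^ 2 = μA := by rw [hμA]; ring
  have eKB : KB = Real.exp (-(s * a / γ)) *
      Real.exp (s / γ * μ + (s / γ) ^ 2 * σ ^ 2 / 2) := by
    rw [hKB, ← Real.exp_add]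
    congr 1
    rw [div_pow, hs3]
    field_simp
    ring
  have eKA : KA = Real.exp (s * a / γ) *
      Real.exp (-(s / γ) * μ + (-(s / γ)) ^ 2 * σ ^ 2 / 2) := by
    rw [hKA, ← Real.exp_add]
    congr 1
    rw [neg_pow, div_pow, hs3]
    field_simp
    ring
  have hB : ∀ w ∈ Iic a, f w =
      KB * ((1 + s * a / γ) * (w * normalPDF μB σ w) +
        (-(s / γ)) * (w ^ 2 * normalPDF μB σ w)) := by
    intro w hw
    have hw' : w ≤ a := hw
    have habs : |w - a| = a - w := by rw [abs_sub_comm, abs_of_nonneg (by linarith)]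
    have e1 : -s * (a - w) / γ = s / γ * w + -(s * a / γ) := by field_simp; ring
    have e2 := expShift (s / γ) μ w hσ.ne'
    rw [eμB] at e2
    rw [hf]
    simp only []
    rw [habs, e1, Real.exp_add, eKB]
    linear_combination (w * (1 + s * (a - w) / γ) * Real.exp (-(s * a / γ))) * e2
  have hA : ∀ w ∈ Ioi a, f w =
      KA * ((1 - s * a / γ) * (w * normalPDF μA σ w) +
        (s / γ) * (w ^ 2 * normalPDF μA σ w)) := by
    intro w hw
    have hw' : a < w := hw
    have habs : |w - a| = w - a := abs_of_nonneg (by linarith)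
    have e1 : -s * (w - a) / γ = -(s / γ) * w + s * a / γ := by field_simp; ring
    have e2 := expShift (-(s / γ)) μ w hσ.ne'
    rw [eμA] at e2
    rw [hf]
    simp only []
    rw [habs, e1, Real.exp_add, eKA]
    linear_combination (w * (1 + s * (w - a) / γ) * Real.exp (s * a / γ)) * e2
  -- integrability
  have intB : Integrable (fun w => KB * ((1 + s * a / γ) * (w * normalPDF μB σ w) +
      (-(s / γ)) * (w ^ 2 * normalPDF μB σ w))) :=
    (( ((integrable_mul_normalPDF hσ μB).const_mul _).add
       ((integrable_sq_mul_normalPDF hσ μB).const_mul _)).const_mul _)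
  have intA : Integrable (fun w => KA * ((1 - s * a / γ) * (w * normalPDF μA σ w) +
      (s / γ) * (w ^ 2 * normalPDF μA σ w))) :=
    (( ((integrable_mul_normalPDF hσ μA).const_mul _).add
       ((integrable_sq_mul_normalPDF hσ μA).const_mul _)).const_mul _)
  have hfL : IntegrableOn f (Iic a) :=
    intB.integrableOn.congr_fun (fun x hx => (hB x hx).symm) measurableSet_Iic
  have hfR : IntegrableOn f (Ioi a) :=
    intA.integrableOn.congr_fun (fun x hx => (hA x hx).symm) measurableSet_Ioi
  have hsplit := intervalIntegral.integral_Iic_add_Ioi hfL hfR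
  -- compute each piece
  have hIic : ∫ w in Iic a, f w =
      KB * ((1 + s * a / γ) * (μB * Phi ((a - μB) / σ) - σ ^ 2 * normalPDF μB σ a) +
        (-(s / γ)) * ((μB ^ 2 + σ ^ 2) * Phi ((a - μB) / σ) -
          σ ^ 2 * (a + μB) * normalPDF μB σ a)) := by
    rw [setIntegral_congr_fun measurableSet_Iic hB, integral_const_mul,
      integral_add (((integrable_mul_normalPDF hσ μB).const_mul _).integrableOn)
        (((integrable_sq_mul_normalPDF hσ μB).const_mul _).integrableOn),
      integral_const_mul, integral_const_mul, M1ic μB hσ a, M2ic μB hσ a]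
  have hIoi : ∫ w in Ioi a, f w =
      KA * ((1 - s * a / γ) * (μA * Phi ((μA - a) / σ) + σ ^ 2 * normalPDF μA σ a) +
        (s / γ) * ((μA ^ 2 + σ ^ 2) * Phi ((μA - a) / σ) +
          σ ^ 2 * (a + μA) * normalPDF μA σ a)) := by
    rw [setIntegral_congr_fun measurableSet_Ioi hA, integral_const_mul,
      integral_add (((integrable_mul_normalPDF hσ μA).const_mul _).integrableOn)
        (((integrable_sq_mul_normalPDF hσ μA).const_mul _).integrableOn),
      integral_const_mul, integral_const_mul, M1oi μA hσ a, M2oi μA hσ a]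
  have eEB : (σ / Real.sqrt (2 * Real.pi)) * Real.exp (-(a - μB) ^ 2 / (2 * σ ^ 2)) =
      σ ^ 2 * normalPDF μB σ a := by
    unfold normalPDF
    field_simp
  have eEA : (σ / Real.sqrt (2 * Real.pi)) * Real.exp (-(a - μA) ^ 2 / (2 * σ ^ 2)) =
      σ ^ 2 * normalPDF μA σ a := by
    unfold normalPDF
    field_simp
  rw [← hsplit, hIic, hIoi]
  linear_combination (KA * ((1 - s * a / γ) + s / γ * (μA + a)) - 2 * KA * (1 + s * μA / γ)) * eEA +
    (2 * KB * (1 - s * μB / γ) - KB * ((1 + s * a / γ) - s / γ * (μB + a))) * eEB
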